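/- Let n ≥ 3, 2 ≤ i_1 ≤ n−2, 1 ≤ t_2 ≤ i_1 − 1, and i_1 + 1 − t_2 ≤ i_2 ≤ n − t_2 − 1. Let P = {α ∈ ℕ^n : |α| = n, α_1 + ... + α_{i_1} ≤ i_1 + 1, α_{t_2+1} + ... + α_{t_2+i_2} ≤ i_2 + 1} (interpreting the second sum cyclically if t_2 + i_2 > n). Then there exist no subsets C_1,...,C_n ⊆ [n] with P = {Σ_{k=1}^n e_{j_k} : j_k ∈ C_k}. -/

import Mathlib

lemma sum_single_apply {n : ℕ} (j : Fin n → Fin n) (v : Fin n) :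
    (∑ k, Pi.single (j k) 1 : Fin n → ℕ) v = (Finset.univ.filter (fun k => j k = v)).card := by
  rw [Finset.sum_apply, Finset.card_filter]
  refine Finset.sum_congr rfl (fun k _ => ?_)
  rw [Pi.single_apply]
  by_cases h : j k = v
  · simp [h]
  · rw [if_neg (fun hv => h hv.symm), if_neg h]

lemma sum_single_filter {n : ℕ} (j : Fin n → Fin n) (p : Fin n → Prop) [DecidablePred p] :
    ∑ v ∈ Finset.univ.filter p, (∑ k, Pi.single (j k) 1 : Fin n → ℕ) v
      = (Finset.univ.filter (fun k => p (j k))).card := by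
  simp only [Finset.sum_apply]
  rw [Finset.sum_comm]
  have h : ∀ k : Fin n, ∑ v ∈ Finset.univ.filter p, Pi.single (j k) (1:ℕ) v
      = if p (j k) then 1 else 0 := by
    intro k
    rw [Finset.sum_congr rfl (fun v _ => Pi.single_apply (j k) 1 v)]
    rw [Finset.sum_ite_eq' (Finset.univ.filter p) (j k) (fun _ => (1:ℕ))]
    simp
  rw [Finset.sum_congr rfl (fun k _ => h k), Finset.card_filter]

lemma sum_single_total {n : ℕ} (j : Fin n → Fin n) :
    ∑ v, (∑ k, Pi.single (j k) 1 : Fin n → ℕ) v = n := by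
  simp only [Finset.sum_apply]
  rw [Finset.sum_comm]
  simp [Finset.sum_pi_single']

lemma sum_two_ite {n : ℕ} (S : Finset (Fin n)) (u w : Fin n) (c d : ℕ) :
    ∑ v ∈ S, ((if v = u then c else 0) + (if v = w then d else 0)) =
      (if u ∈ S then c else 0) + (if w ∈ S then d else 0) := by
  rw [Finset.sum_add_distrib,
    Finset.sum_ite_eq' S u (fun _ => c), Finset.sum_ite_eq' S w (fun _ => d)]

lemma sum_three_ite {n : ℕ} (S : Finset (Fin n)) (u w x : Fin n) (c d e : ℕ) :
    ∑ v ∈ S, ((if v = u then c else 0) + ((if v = w then d else 0) + (if v = x then e else 0))) =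
      (if u ∈ S then c else 0) + ((if w ∈ S then d else 0) + (if x ∈ S then e else 0)) := by
  rw [Finset.sum_add_distrib, Finset.sum_ite_eq' S u (fun _ => c), sum_two_ite]

theorem stmt12 (n i1 i2 t2 : ℕ) (hn : 3 ≤ n) (hi1a : 2 ≤ i1) (hi1b : i1 ≤ n - 2)
    (ht2a : 1 ≤ t2) (ht2b : t2 ≤ i1 - 1)
    (hi2a : i1 + 1 - t2 ≤ i2) (hi2b : i2 ≤ n - t2 - 1) :
    ¬ ∃ C : Fin n → Set (Fin n),
      {α : Fin n → ℕ | ∑ k, α k = n ∧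
        ∑ k ∈ Finset.univ.filter (fun m : Fin n => m.val < i1), α k ≤ i1 + 1 ∧
        ∑ k ∈ Finset.univ.filter (fun m : Fin n => t2 ≤ m.val ∧ m.val < t2 + i2), α k ≤ i2 + 1} =
      {α : Fin n → ℕ | ∃ j : Fin n → Fin n, (∀ k, j k ∈ C k) ∧ α = ∑ k, Pi.single (j k) 1} := by
  rintro ⟨C, hC⟩
  have hC' := Set.ext_iff.mp hC
  -- arithmetic consequences
  have h2n : i1 + 2 ≤ n := by omega
  have htn : t2 + i2 + 1 ≤ n := by omega
  have ht1 : t2 < i1 := by omega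
  have hib : i1 + 1 ≤ t2 + i2 := by omega
  have h1i2 : 1 ≤ i2 := by omega
  have hi2n : i2 + 2 ≤ n := by omega
  obtain ⟨y, hy⟩ : ∃ y, y = min i1 i2 + 1 := ⟨_, rfl⟩
  obtain ⟨s, hs⟩ : ∃ s, s = min (i1 + i2 + 2) n := ⟨_, rfl⟩
  obtain ⟨z, hz⟩ : ∃ z, z = s - (i1 + 1) := ⟨_, rfl⟩
  -- the special vertices
  obtain ⟨a0, ha0⟩ : ∃ a : Fin n, (a : ℕ) = 0 := ⟨⟨0, by omega⟩, rfl⟩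
  obtain ⟨mm, hmm⟩ : ∃ a : Fin n, (a : ℕ) = t2 := ⟨⟨t2, by omega⟩, rfl⟩
  obtain ⟨bb, hbb⟩ : ∃ a : Fin n, (a : ℕ) = t2 + i2 - 1 := ⟨⟨t2 + i2 - 1, by omega⟩, rfl⟩
  obtain ⟨oo, hoo⟩ : ∃ a : Fin n, (a : ℕ) = n - 1 := ⟨⟨n - 1, by omega⟩, rfl⟩
  have hmo : mm ≠ oo := fun h => by rw [h] at hmm; omega
  have hao : a0 ≠ oo := fun h => by rw [h] at ha0; omega
  have hab : a0 ≠ bb := fun h => by rw [h] at ha0; omega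
  have hbo : bb ≠ oo := fun h => by rw [h] at hbb; omega
  -- membership facts for the two window filters
  have hmmFA : mm ∈ Finset.univ.filter (fun m : Fin n => m.val < i1) :=
    Finset.mem_filter.mpr ⟨Finset.mem_univ _, show (mm : ℕ) < i1 by omega⟩
  have hmmFB : mm ∈ Finset.univ.filter (fun m : Fin n => t2 ≤ m.val ∧ m.val < t2 + i2) :=
    Finset.mem_filter.mpr ⟨Finset.mem_univ _,
      show t2 ≤ (mm : ℕ) ∧ (mm : ℕ) < t2 + i2 by omega⟩
  have hooFA : oo ∉ Finset.univ.filter (fun m : Fin n => m.val < i1) := by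
    intro hmem
    have h' : (oo : ℕ) < i1 := (Finset.mem_filter.mp hmem).2
    omega
  have hooFB : oo ∉ Finset.univ.filter (fun m : Fin n => t2 ≤ m.val ∧ m.val < t2 + i2) := by
    intro hmem
    have h' : t2 ≤ (oo : ℕ) ∧ (oo : ℕ) < t2 + i2 := (Finset.mem_filter.mp hmem).2
    omega
  have ha0FA : a0 ∈ Finset.univ.filter (fun m : Fin n => m.val < i1) :=
    Finset.mem_filter.mpr ⟨Finset.mem_univ _, show (a0 : ℕ) < i1 by omega⟩
  have ha0FB : a0 ∉ Finset.univ.filter (fun m : Fin n => t2 ≤ m.val ∧ m.val < t2 + i2) := by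
    intro hmem
    have h' : t2 ≤ (a0 : ℕ) ∧ (a0 : ℕ) < t2 + i2 := (Finset.mem_filter.mp hmem).2
    omega
  have hbbFA : bb ∉ Finset.univ.filter (fun m : Fin n => m.val < i1) := by
    intro hmem
    have h' : (bb : ℕ) < i1 := (Finset.mem_filter.mp hmem).2
    omega
  have hbbFB : bb ∈ Finset.univ.filter (fun m : Fin n => t2 ≤ m.val ∧ m.val < t2 + i2) :=
    Finset.mem_filter.mpr ⟨Finset.mem_univ _,
      show t2 ≤ (bb : ℕ) ∧ (bb : ℕ) < t2 + i2 by omega⟩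
  -- First witness γ : many C k meet the intersection of the windows
  obtain ⟨γ, hγdef⟩ : ∃ g : Fin n → ℕ,
      g = fun v => (if v = mm then y else 0) + (if v = oo then n - y else 0) := ⟨_, rfl⟩
  have hγv : ∀ v, γ v = (if v = mm then y else 0) + (if v = oo then n - y else 0) := by
    intro v; rw [hγdef]
  have hγmem : γ ∈ {α : Fin n → ℕ | ∑ k, α k = n ∧
      ∑ k ∈ Finset.univ.filter (fun m : Fin n => m.val < i1), α k ≤ i1 + 1 ∧
      ∑ k ∈ Finset.univ.filter (fun m : Fin n => t2 ≤ m.val ∧ m.val < t2 + i2), α k ≤ i2 + 1} := by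
    refine ⟨?_, ?_, ?_⟩
    · rw [Finset.sum_congr rfl (fun v _ => hγv v), sum_two_ite,
        if_pos (Finset.mem_univ mm), if_pos (Finset.mem_univ oo)]
      omega
    · rw [Finset.sum_congr rfl (fun v _ => hγv v), sum_two_ite,
        if_pos hmmFA, if_neg hooFA]
      omega
    · rw [Finset.sum_congr rfl (fun v _ => hγv v), sum_two_ite,
        if_pos hmmFB, if_neg hooFB]
      omega
  obtain ⟨j1, hj1, hrep1⟩ := (hC' γ).mp hγmem
  have h1m : (Finset.univ.filter (fun k => j1 k = mm)).card = y := by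
    have hh := congrFun hrep1 mm
    rw [sum_single_apply j1 mm, hγv mm, if_pos rfl, if_neg hmo] at hh
    omega
  -- Second witness δ : many C k meet the union of the windows
  obtain ⟨δ, hδdef⟩ : ∃ g : Fin n → ℕ, g = fun v =>
      (if v = a0 then i1 + 1 else 0) +
        ((if v = bb then z else 0) + (if v = oo then n - s else 0)) := ⟨_, rfl⟩
  have hδv : ∀ v, δ v = (if v = a0 then i1 + 1 else 0) +
      ((if v = bb then z else 0) + (if v = oo then n - s else 0)) := by
    intro v; rw [hδdef]
  have hδmem : δ ∈ {α : Fin n → ℕ | ∑ k, α k = n ∧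
      ∑ k ∈ Finset.univ.filter (fun m : Fin n => m.val < i1), α k ≤ i1 + 1 ∧
      ∑ k ∈ Finset.univ.filter (fun m : Fin n => t2 ≤ m.val ∧ m.val < t2 + i2), α k ≤ i2 + 1} := by
    refine ⟨?_, ?_, ?_⟩
    · rw [Finset.sum_congr rfl (fun v _ => hδv v), sum_three_ite,
        if_pos (Finset.mem_univ a0), if_pos (Finset.mem_univ bb), if_pos (Finset.mem_univ oo)]
      omega
    · rw [Finset.sum_congr rfl (fun v _ => hδv v), sum_three_ite,
        if_pos ha0FA, if_neg hbbFA, if_neg hooFA]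
    · rw [Finset.sum_congr rfl (fun v _ => hδv v), sum_three_ite,
        if_neg ha0FB, if_pos hbbFB, if_neg hooFB]
      omega
  obtain ⟨j2, hj2, hrep2⟩ := (hC' δ).mp hδmem
  have h2a : (Finset.univ.filter (fun k => j2 k = a0)).card = i1 + 1 := by
    have hh := congrFun hrep2 a0
    rw [sum_single_apply j2 a0, hδv a0, if_pos rfl, if_neg hab, if_neg hao] at hh
    omega
  have h2b : (Finset.univ.filter (fun k => j2 k = bb)).card = z := by
    have hh := congrFun hrep2 bb
    rw [sum_single_apply j2 bb, hδv bb, if_neg (Ne.symm hab), if_pos rfl, if_neg hbo] at hh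
    omega
  classical
  -- counting sets
  obtain ⟨QI, hQIdef⟩ : ∃ Q : Finset (Fin n), Q = Finset.univ.filter
      (fun k => ∃ v ∈ C k, (v : ℕ) < i1 ∧ (t2 ≤ (v : ℕ) ∧ (v : ℕ) < t2 + i2)) := ⟨_, rfl⟩
  obtain ⟨QU, hQUdef⟩ : ∃ Q : Finset (Fin n), Q = Finset.univ.filter
      (fun k => ∃ v ∈ C k, (v : ℕ) < i1 ∨ (t2 ≤ (v : ℕ) ∧ (v : ℕ) < t2 + i2)) := ⟨_, rfl⟩
  have hQIcard : y ≤ QI.card := by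
    rw [← h1m, hQIdef]
    apply Finset.card_le_card
    intro k hk
    rw [Finset.mem_filter] at hk ⊢
    have hkm : j1 k = mm := hk.2
    exact ⟨Finset.mem_univ _, mm, hkm ▸ hj1 k, by omega, by omega, by omega⟩
  have hQUcard : s ≤ QU.card := by
    have hdisj : Disjoint (Finset.univ.filter (fun k => j2 k = a0))
        (Finset.univ.filter (fun k => j2 k = bb)) := by
      rw [Finset.disjoint_left]
      intro k hk1 hk2
      have e1 : j2 k = a0 := (Finset.mem_filter.mp hk1).2
      have e2 : j2 k = bb := (Finset.mem_filter.mp hk2).2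
      exact hab (e1 ▸ e2 ▸ rfl)
    have hsub : (Finset.univ.filter (fun k => j2 k = a0)) ∪
        (Finset.univ.filter (fun k => j2 k = bb)) ⊆ QU := by
      intro k hk
      rw [Finset.mem_union] at hk
      rw [hQUdef, Finset.mem_filter]
      rcases hk with hk | hk
      · have e : j2 k = a0 := (Finset.mem_filter.mp hk).2
        exact ⟨Finset.mem_univ _, a0, e ▸ hj2 k, Or.inl (by omega)⟩
      · have e : j2 k = bb := (Finset.mem_filter.mp hk).2
        exact ⟨Finset.mem_univ _, bb, e ▸ hj2 k, Or.inr ⟨by omega, by omega⟩⟩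
    have hcard := Finset.card_le_card hsub
    rw [Finset.card_union_of_disjoint hdisj, h2a, h2b] at hcard
    omega
  -- the greedy selection
  obtain ⟨j3, hj3def⟩ : ∃ f : Fin n → Fin n, f = fun k =>
      if h : ∃ v ∈ C k, (v : ℕ) < i1 ∧ (t2 ≤ (v : ℕ) ∧ (v : ℕ) < t2 + i2) then h.choose
      else if h2 : ∃ v ∈ C k, (v : ℕ) < i1 ∨ (t2 ≤ (v : ℕ) ∧ (v : ℕ) < t2 + i2) then h2.choose
      else j1 k := ⟨_, rfl⟩
  have hj3k : ∀ k, j3 k =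
      if h : ∃ v ∈ C k, (v : ℕ) < i1 ∧ (t2 ≤ (v : ℕ) ∧ (v : ℕ) < t2 + i2) then h.choose
      else if h2 : ∃ v ∈ C k, (v : ℕ) < i1 ∨ (t2 ≤ (v : ℕ) ∧ (v : ℕ) < t2 + i2) then h2.choose
      else j1 k := by
    intro k; rw [hj3def]
  have hj3mem : ∀ k, j3 k ∈ C k := by
    intro k
    rw [hj3k k]
    split
    · next h => exact h.choose_spec.1
    · split
      · next h => exact h.choose_spec.1
      · exact hj1 k
  have h3a : ∀ k, (∃ v ∈ C k, (v : ℕ) < i1 ∧ (t2 ≤ (v : ℕ) ∧ (v : ℕ) < t2 + i2)) →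
      ((j3 k : ℕ) < i1 ∧ (t2 ≤ (j3 k : ℕ) ∧ (j3 k : ℕ) < t2 + i2)) := by
    intro k h
    rw [hj3k k, dif_pos h]
    exact h.choose_spec.2
  have h3b : ∀ k, (∃ v ∈ C k, (v : ℕ) < i1 ∨ (t2 ≤ (v : ℕ) ∧ (v : ℕ) < t2 + i2)) →
      ((j3 k : ℕ) < i1 ∨ (t2 ≤ (j3 k : ℕ) ∧ (j3 k : ℕ) < t2 + i2)) := by
    intro k h
    by_cases h1 : ∃ v ∈ C k, (v : ℕ) < i1 ∧ (t2 ≤ (v : ℕ) ∧ (v : ℕ) < t2 + i2)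
    · exact Or.inl (h3a k h1).1
    · rw [hj3k k, dif_neg h1, dif_pos h]
      exact h.choose_spec.2
  obtain ⟨-, hA3, hB3⟩ := (hC' (∑ k, Pi.single (j3 k) 1)).mpr ⟨j3, hj3mem, rfl⟩
  rw [sum_single_filter j3 (fun m : Fin n => m.val < i1)] at hA3
  rw [sum_single_filter j3 (fun m : Fin n => t2 ≤ m.val ∧ m.val < t2 + i2)] at hB3
  have hA3' : (Finset.univ.filter (fun k => (j3 k : ℕ) < i1)).card ≤ i1 + 1 := hA3
  have hB3' : (Finset.univ.filter
      (fun k => t2 ≤ (j3 k : ℕ) ∧ (j3 k : ℕ) < t2 + i2)).card ≤ i2 + 1 := hB3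
  -- inclusion–exclusion
  have hie := Finset.card_union_add_card_inter
    (Finset.univ.filter (fun k => (j3 k : ℕ) < i1))
    (Finset.univ.filter (fun k => t2 ≤ (j3 k : ℕ) ∧ (j3 k : ℕ) < t2 + i2))
  rw [← Finset.filter_or, ← Finset.filter_and] at hie
  have hIsub : QI ⊆ Finset.univ.filter
      (fun k => (j3 k : ℕ) < i1 ∧ (t2 ≤ (j3 k : ℕ) ∧ (j3 k : ℕ) < t2 + i2)) := by
    intro k hk
    rw [hQIdef, Finset.mem_filter] at hk
    exact Finset.mem_filter.mpr ⟨Finset.mem_univ _, h3a k hk.2⟩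
  have hUsub : QU ⊆ Finset.univ.filter
      (fun k => (j3 k : ℕ) < i1 ∨ (t2 ≤ (j3 k : ℕ) ∧ (j3 k : ℕ) < t2 + i2)) := by
    intro k hk
    rw [hQUdef, Finset.mem_filter] at hk
    exact Finset.mem_filter.mpr ⟨Finset.mem_univ _, h3b k hk.2⟩
  have hI := Finset.card_le_card hIsub
  have hU := Finset.card_le_card hUsub
  omega
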